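/- Let n be a positive integer and let p ∈ (0,1), and set λ = −n·log(1−p) (natural logarithm). Then a Binomial(n, p) random variable is stochastically dominated by a Poisson random variable with mean λ: for every natural number k, Pr(Binomial(n,p) ≥ k) ≤ Pr(Poisson(λ) ≥ k). -/

import Mathlib

open Finset

/-- Triangular sum swap. -/
lemma bdp_sum_swap (k : ℕ) (g : ℕ → ℕ → ℝ) :
    ∑ j ∈ range k, ∑ i ∈ range (j + 1), g i (j - i)
      = ∑ i ∈ range k, ∑ t ∈ range (k - i), g i t := by
  induction k with
  | zero => simp
  | succ k ih =>
    have hR : ∑ i ∈ range (k + 1), ∑ t ∈ range (k + 1 - i), g i t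
        = (∑ i ∈ range k, ∑ t ∈ range (k - i), g i t)
          + ∑ i ∈ range (k + 1), g i (k - i) := by
      rw [sum_range_succ, sum_range_succ]
      have h1 : ∀ i ∈ range k, ∑ t ∈ range (k + 1 - i), g i t
          = ∑ t ∈ range (k - i), g i t + g i (k - i) := by
        intro i hi
        rw [Nat.succ_sub (le_of_lt (mem_range.mp hi)), sum_range_succ]
      rw [sum_congr rfl h1, sum_add_distrib]
      simp [Nat.sub_self]
      ring
    rw [sum_range_succ, ih, hR]

/-- Poisson pmf convolution term identity. -/
lemma bdp_conv_term (lam mu : ℝ) (j : ℕ) :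
    Real.exp (-(lam + mu)) * (lam + mu) ^ j / (j.factorial : ℝ)
      = ∑ i ∈ range (j + 1),
          (Real.exp (-lam) * lam ^ i / (i.factorial : ℝ))
            * (Real.exp (-mu) * mu ^ (j - i) / ((j - i).factorial : ℝ)) := by
  rw [add_pow]
  rw [Finset.mul_sum, Finset.sum_div]
  refine Finset.sum_congr rfl ?_
  intro i hi
  have hij : i ≤ j := Nat.lt_succ_iff.mp (mem_range.mp hi)
  have hC : ((j.choose i : ℝ)) * (i.factorial : ℝ) * ((j - i).factorial : ℝ)
      = (j.factorial : ℝ) := by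
    exact_mod_cast congrArg (Nat.cast (R := ℝ)) (Nat.choose_mul_factorial_mul_factorial hij)
  have hexp : Real.exp (-(lam + mu)) = Real.exp (-lam) * Real.exp (-mu) := by
    rw [← Real.exp_add]; ring_nf
  have hi0 : (i.factorial : ℝ) ≠ 0 := Nat.cast_ne_zero.mpr (Nat.factorial_ne_zero i)
  have hji0 : ((j - i).factorial : ℝ) ≠ 0 := Nat.cast_ne_zero.mpr (Nat.factorial_ne_zero _)
  have hj0 : (j.factorial : ℝ) ≠ 0 := Nat.cast_ne_zero.mpr (Nat.factorial_ne_zero j)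
  rw [hexp]
  field_simp
  linear_combination (lam ^ i * mu ^ (j - i)) * hC
set_option maxHeartbeats 1000000 in
/-- Convolution bound for Poisson partial sums (CDFs). -/
lemma bdp_conv (lam mu : ℝ) (hl : 0 ≤ lam) (hm : 0 ≤ mu) (k : ℕ) :
    ∑ j ∈ range (k + 1), Real.exp (-(lam + mu)) * (lam + mu) ^ j / (j.factorial : ℝ)
      ≤ ∑ j ∈ range k, Real.exp (-lam) * lam ^ j / (j.factorial : ℝ)
        + Real.exp (-mu) * (Real.exp (-lam) * lam ^ k / (k.factorial : ℝ)) := by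
  have hrw : ∑ j ∈ range (k + 1), Real.exp (-(lam + mu)) * (lam + mu) ^ j / (j.factorial : ℝ)
      = ∑ i ∈ range (k + 1),
          (Real.exp (-lam) * lam ^ i / (i.factorial : ℝ))
            * ∑ t ∈ range (k + 1 - i), Real.exp (-mu) * mu ^ t / (t.factorial : ℝ) := by
    calc ∑ j ∈ range (k + 1), Real.exp (-(lam + mu)) * (lam + mu) ^ j / (j.factorial : ℝ)
        = ∑ j ∈ range (k + 1), ∑ i ∈ range (j + 1),
            (Real.exp (-lam) * lam ^ i / (i.factorial : ℝ))
              * (Real.exp (-mu) * mu ^ (j - i) / ((j - i).factorial : ℝ)) :=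
          Finset.sum_congr rfl fun j _ => bdp_conv_term lam mu j
      _ = ∑ i ∈ range (k + 1), ∑ t ∈ range (k + 1 - i),
            (Real.exp (-lam) * lam ^ i / (i.factorial : ℝ))
              * (Real.exp (-mu) * mu ^ t / (t.factorial : ℝ)) :=
          bdp_sum_swap (k + 1) (fun i t => Real.exp (-lam) * lam ^ i / (i.factorial : ℝ)
            * (Real.exp (-mu) * mu ^ t / (t.factorial : ℝ)))
      _ = _ := Finset.sum_congr rfl fun i _ => by rw [← Finset.mul_sum]
  rw [hrw, sum_range_succ]
  have hclose : ∀ m : ℕ, ∑ t ∈ range m, Real.exp (-mu) * mu ^ t / (t.factorial : ℝ) ≤ 1 := by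
    intro m
    have h1 : ∑ t ∈ range m, Real.exp (-mu) * mu ^ t / (t.factorial : ℝ)
        = Real.exp (-mu) * ∑ t ∈ range m, mu ^ t / (t.factorial : ℝ) := by
      rw [Finset.mul_sum]; exact Finset.sum_congr rfl fun t _ => by ring
    rw [h1]
    calc Real.exp (-mu) * ∑ t ∈ range m, mu ^ t / (t.factorial : ℝ)
        ≤ Real.exp (-mu) * Real.exp mu :=
          mul_le_mul_of_nonneg_left (Real.sum_le_exp_of_nonneg hm m) (Real.exp_pos _).le
      _ = 1 := by rw [← Real.exp_add]; simp
  have hterm_nonneg : ∀ i : ℕ, 0 ≤ Real.exp (-lam) * lam ^ i / (i.factorial : ℝ) := by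
    intro i
    positivity
  refine add_le_add ?_ ?_
  · refine Finset.sum_le_sum fun i _ => ?_
    calc (Real.exp (-lam) * lam ^ i / (i.factorial : ℝ))
          * ∑ t ∈ range (k + 1 - i), Real.exp (-mu) * mu ^ t / (t.factorial : ℝ)
        ≤ (Real.exp (-lam) * lam ^ i / (i.factorial : ℝ)) * 1 :=
          mul_le_mul_of_nonneg_left (hclose _) (hterm_nonneg i)
      _ = _ := mul_one _
  · have h1 : k + 1 - k = 1 := by omega
    rw [h1, Finset.sum_range_one]
    simp [mul_comm]

/-- Binomial CDF recursion (Pascal). -/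
lemma bdp_binom_rec (p : ℝ) (n m : ℕ) (hm : m ≤ n) :
    ∑ j ∈ range (m + 1), ((n + 1).choose j : ℝ) * p ^ j * (1 - p) ^ (n + 1 - j)
      = (1 - p) * ∑ j ∈ range (m + 1), (n.choose j : ℝ) * p ^ j * (1 - p) ^ (n - j)
        + p * ∑ j ∈ range m, (n.choose j : ℝ) * p ^ j * (1 - p) ^ (n - j) := by
  induction m with
  | zero => simp [pow_succ]; ring
  | succ m ih =>
    have hm' : m ≤ n := Nat.le_of_succ_le hm
    rw [sum_range_succ, ih hm']
    have hch : (((n + 1).choose (m + 1) : ℝ)) = (n.choose m : ℝ) + (n.choose (m + 1) : ℝ) := by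
      rw [Nat.choose_succ_succ]; push_cast; ring
    have he1 : n + 1 - (m + 1) = n - m := Nat.succ_sub_succ n m
    have he2 : n - m = (n - (m + 1)) + 1 := by omega
    simp only [sum_range_succ]
    rw [hch, he1, he2]
    ring

/-- Poisson partial sums are at most 1. -/
lemma bdp_cdf_le_one (mu : ℝ) (hm : 0 ≤ mu) (m : ℕ) :
    ∑ t ∈ range m, Real.exp (-mu) * mu ^ t / (t.factorial : ℝ) ≤ 1 := by
  have h1 : ∑ t ∈ range m, Real.exp (-mu) * mu ^ t / (t.factorial : ℝ)
      = Real.exp (-mu) * ∑ t ∈ range m, mu ^ t / (t.factorial : ℝ) := by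
    rw [Finset.mul_sum]; exact Finset.sum_congr rfl fun t _ => by ring
  rw [h1]
  calc Real.exp (-mu) * ∑ t ∈ range m, mu ^ t / (t.factorial : ℝ)
      ≤ Real.exp (-mu) * Real.exp mu :=
        mul_le_mul_of_nonneg_left (Real.sum_le_exp_of_nonneg hm m) (Real.exp_pos _).le
    _ = 1 := by rw [← Real.exp_add]; simp

/-- Binomial pmf sums to 1. -/
lemma bdp_binom_sum (p : ℝ) (n : ℕ) :
    ∑ j ∈ range (n + 1), (n.choose j : ℝ) * p ^ j * (1 - p) ^ (n - j) = 1 := by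
  have h := add_pow p (1 - p) n
  simp only [add_sub_cancel, one_pow] at h
  exact (Finset.sum_congr rfl fun j _ => by ring).trans h.symm

/-- Main CDF comparison, by induction on `n`. -/
lemma bdp_main (p mu : ℝ) (hp : 0 < p) (hp1 : p < 1) (hmu : mu = -Real.log (1 - p)) :
    ∀ n : ℕ, ∀ k ≤ n + 1,
      ∑ j ∈ range k, Real.exp (-((n : ℝ) * mu)) * ((n : ℝ) * mu) ^ j / (j.factorial : ℝ)
        ≤ ∑ j ∈ range k, (n.choose j : ℝ) * p ^ j * (1 - p) ^ (n - j) := by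
  have hq : 0 < 1 - p := by linarith
  have hmupos : 0 ≤ mu := by
    rw [hmu]
    have := Real.log_neg hq (by linarith)
    linarith
  have hemu : Real.exp (-mu) = 1 - p := by
    rw [hmu, neg_neg, Real.exp_log hq]
  intro n
  induction n with
  | zero =>
    intro k hk
    interval_cases k
    · simp
    · norm_num
  | succ n ih =>
    intro k hk
    match k with
    | 0 => simp
    | (m + 1) =>
      push_cast
      by_cases hmn : m ≤ n
      · have hnn : (0 : ℝ) ≤ (n : ℝ) * mu := by positivity
        have hS1 : ∑ j ∈ range (m + 1),
              Real.exp (-((n : ℝ) * mu)) * ((n : ℝ) * mu) ^ j / (j.factorial : ℝ)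
            = (∑ j ∈ range m,
                Real.exp (-((n : ℝ) * mu)) * ((n : ℝ) * mu) ^ j / (j.factorial : ℝ))
              + Real.exp (-((n : ℝ) * mu)) * ((n : ℝ) * mu) ^ m / (m.factorial : ℝ) :=
          sum_range_succ _ m
        calc ∑ j ∈ range (m + 1),
              Real.exp (-(((n : ℝ) + 1) * mu)) * (((n : ℝ) + 1) * mu) ^ j / (j.factorial : ℝ)
            = ∑ j ∈ range (m + 1),
              Real.exp (-((n : ℝ) * mu + mu)) * ((n : ℝ) * mu + mu) ^ j / (j.factorial : ℝ) := by
              rw [show ((n : ℝ) + 1) * mu = (n : ℝ) * mu + mu by ring]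
          _ ≤ (∑ j ∈ range m,
                Real.exp (-((n : ℝ) * mu)) * ((n : ℝ) * mu) ^ j / (j.factorial : ℝ))
              + Real.exp (-mu) * (Real.exp (-((n : ℝ) * mu)) * ((n : ℝ) * mu) ^ m / (m.factorial : ℝ)) :=
              bdp_conv ((n : ℝ) * mu) mu hnn hmupos m
          _ = p * (∑ j ∈ range m,
                Real.exp (-((n : ℝ) * mu)) * ((n : ℝ) * mu) ^ j / (j.factorial : ℝ))
              + (1 - p) * ∑ j ∈ range (m + 1),
                Real.exp (-((n : ℝ) * mu)) * ((n : ℝ) * mu) ^ j / (j.factorial : ℝ) := by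
              rw [hemu, hS1]; ring
          _ ≤ p * (∑ j ∈ range m, (n.choose j : ℝ) * p ^ j * (1 - p) ^ (n - j))
              + (1 - p) * ∑ j ∈ range (m + 1), (n.choose j : ℝ) * p ^ j * (1 - p) ^ (n - j) := by
              have h1 := ih m (by omega)
              have h2 := ih (m + 1) (by omega)
              nlinarith
          _ = ∑ j ∈ range (m + 1), ((n + 1).choose j : ℝ) * p ^ j * (1 - p) ^ (n + 1 - j) := by
              rw [bdp_binom_rec p n m hmn]; ring
      · have hm2 : m = n + 1 := by omega
        subst hm2
        have hnn : (0 : ℝ) ≤ ((n : ℝ) + 1) * mu := by positivity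
        calc ∑ j ∈ range (n + 1 + 1),
              Real.exp (-(((n : ℝ) + 1) * mu)) * (((n : ℝ) + 1) * mu) ^ j / (j.factorial : ℝ)
            ≤ 1 := bdp_cdf_le_one _ hnn _
          _ = ∑ j ∈ range (n + 1 + 1), ((n + 1).choose j : ℝ) * p ^ j * (1 - p) ^ (n + 1 - j) :=
              (bdp_binom_sum p (n + 1)).symm

/-- A `Binomial(n,p)` random variable is stochastically dominated by a Poisson random
variable with mean `λ = -n·log(1-p)`: for every `k`,
`Pr(Binomial(n,p) ≥ k) ≤ Pr(Poisson(λ) ≥ k)`. -/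
theorem binomial_dominated_by_poisson (n : ℕ) (hn : 0 < n) (p : ℝ)
    (hp : 0 < p) (hp1 : p < 1) (lam : ℝ) (hlam : lam = -(n : ℝ) * Real.log (1 - p)) :
    ∀ k : ℕ,
      (∑ j ∈ Finset.range (n + 1),
          if k ≤ j then (n.choose j : ℝ) * p ^ j * (1 - p) ^ (n - j) else 0)
        ≤ ∑' j : ℕ,
            if k ≤ j then Real.exp (-lam) * lam ^ j / (Nat.factorial j : ℝ) else 0 := by
  intro k
  have hq : 0 < 1 - p := by linarith
  set mu : ℝ := -Real.log (1 - p) with hmu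
  have hlam' : lam = (n : ℝ) * mu := by rw [hlam, hmu]; ring
  have hmupos : 0 ≤ mu := by
    rw [hmu]
    have := Real.log_neg hq (by linarith)
    linarith
  have hlampos : 0 ≤ lam := by rw [hlam']; positivity
  set a : ℕ → ℝ := fun j => Real.exp (-lam) * lam ^ j / (j.factorial : ℝ) with ha
  have ha_nonneg : ∀ j, 0 ≤ a j := fun j => by rw [ha]; positivity
  have hsumm : Summable a := by
    have h := (Real.summable_pow_div_factorial lam).mul_left (Real.exp (-lam))
    refine h.congr fun j => ?_
    rw [ha]; ring
  have htsuma : ∑' j, a j = 1 := by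
    have h1 : ∑' j : ℕ, lam ^ j / (j.factorial : ℝ) = Real.exp lam := by
      rw [Real.exp_eq_exp_ℝ, NormedSpace.exp_eq_tsum_div]
    calc ∑' j, a j = ∑' j : ℕ, Real.exp (-lam) * (lam ^ j / (j.factorial : ℝ)) :=
          tsum_congr fun j => by rw [ha]; ring
      _ = Real.exp (-lam) * ∑' j : ℕ, lam ^ j / (j.factorial : ℝ) := tsum_mul_left
      _ = 1 := by rw [h1, ← Real.exp_add]; simp
  set f : ℕ → ℝ := fun j => if k ≤ j then a j else 0 with hf
  have hf_nonneg : ∀ j, 0 ≤ f j := by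
    intro j; rw [hf]; dsimp only; split
    · exact ha_nonneg j
    · exact le_refl 0
  have hf_le : ∀ j, f j ≤ a j := by
    intro j; rw [hf]; dsimp only; split
    · exact le_refl _
    · exact ha_nonneg j
  have hfsumm : Summable f := Summable.of_nonneg_of_le hf_nonneg hf_le hsumm
  have htail : ∑' j, f j = 1 - ∑ j ∈ range k, a j := by
    have h2 := Summable.sum_add_tsum_nat_add (f := f) k hfsumm
    have h3 := Summable.sum_add_tsum_nat_add (f := a) k hsumm
    have h4 : ∑ i ∈ range k, f i = 0 := by
      refine Finset.sum_eq_zero fun i hi => ?_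
      rw [hf]; exact if_neg (not_le.mpr (mem_range.mp hi))
    have h5 : ∑' i, f (i + k) = ∑' i, a (i + k) := by
      refine tsum_congr fun i => ?_
      rw [hf]; exact if_pos (Nat.le_add_left k i)
    rw [htsuma] at h3
    rw [h4, h5, zero_add] at h2
    linarith
  have hgoal_rhs : (∑' j : ℕ,
      if k ≤ j then Real.exp (-lam) * lam ^ j / (Nat.factorial j : ℝ) else 0)
      = 1 - ∑ j ∈ range k, a j := htail
  rw [hgoal_rhs]
  by_cases hk : k ≤ n + 1
  · have hLHS : (∑ j ∈ Finset.range (n + 1),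
        if k ≤ j then (n.choose j : ℝ) * p ^ j * (1 - p) ^ (n - j) else 0)
        = (∑ j ∈ range (n + 1), (n.choose j : ℝ) * p ^ j * (1 - p) ^ (n - j))
          - ∑ j ∈ range k, (n.choose j : ℝ) * p ^ j * (1 - p) ^ (n - j) := by
      have hsplit : ∀ j : ℕ, (if k ≤ j then (n.choose j : ℝ) * p ^ j * (1 - p) ^ (n - j) else 0)
          = (n.choose j : ℝ) * p ^ j * (1 - p) ^ (n - j)
            - (if j < k then (n.choose j : ℝ) * p ^ j * (1 - p) ^ (n - j) else 0) := by
        intro j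
        by_cases h : k ≤ j
        · rw [if_pos h, if_neg (not_lt.mpr h)]; ring
        · rw [if_neg h, if_pos (not_le.mp h)]; ring
      rw [Finset.sum_congr rfl fun j _ => hsplit j, Finset.sum_sub_distrib]
      congr 1
      rw [← Finset.sum_subset (Finset.range_subset_range.mpr hk)
        (fun x _ hx => if_neg (by simp only [mem_range, not_lt] at hx; omega))]
      exact Finset.sum_congr rfl fun j hj => if_pos (mem_range.mp hj)
    rw [hLHS, bdp_binom_sum p n]
    have hmain := bdp_main p mu hp hp1 hmu n k hk
    rw [← hlam'] at hmain
    have hmain' : ∑ j ∈ range k, a j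
        ≤ ∑ j ∈ range k, (n.choose j : ℝ) * p ^ j * (1 - p) ^ (n - j) := hmain
    linarith
  · have hLHS0 : (∑ j ∈ Finset.range (n + 1),
        if k ≤ j then (n.choose j : ℝ) * p ^ j * (1 - p) ^ (n - j) else 0) = 0 := by
      refine Finset.sum_eq_zero fun j hj => if_neg ?_
      have := mem_range.mp hj
      omega
    rw [hLHS0]
    have hS := bdp_cdf_le_one lam hlampos k
    have hSa : ∑ j ∈ range k, a j ≤ 1 := hS
    linarith
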